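/- Let (W, S) be a Coxeter group of type A_n. Then every heap of a fully commutative element of W is ranked. -/

import Mathlib

/-- `ρ` is a rank function for the poset `E`:
it increases by exactly 1 along covering relations. -/
def IsRankFunction {E : Type*} [PartialOrder E] (ρ : E → ℤ) : Prop :=
  ∀ a b : E, a ⋖ b → ρ b = ρ a + 1

/-- A poset is ranked if it admits a rank function. -/
def Ranked (E : Type*) [PartialOrder E] : Prop :=
  ∃ ρ : E → ℤ, IsRankFunction ρ

/-- Two elements lie in the same connected component of the poset: the
equivalence relation generated by the covering relation. -/
def SameComponent {E : Type*} [PartialOrder E] (a b : E) : Prop :=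
  Relation.EqvGen (fun x y : E => x ⋖ y) a b

/-- The heap axioms for a labelling `ε : E → P` of a poset `E` with
concurrency relation `C` on the pieces `P`. -/
def IsHeap {E P : Type*} [PartialOrder E] (C : P → P → Prop) (ε : E → P) : Prop :=
  (∀ α β : E, C (ε α) (ε β) → α ≤ β ∨ β ≤ α) ∧
  (∀ α β : E, α ≤ β ↔ Relation.TransGen (fun x y : E => x ≤ y ∧ C (ε x) (ε y)) α β)

/-- `[a, b]` is a minimal balanced subinterval: `a ≠ b`, `ε a = ε b`, and the
only elements of `[a, b]` with label `ε a` are `a` and `b`. -/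
def MinBalanced {E P : Type*} [PartialOrder E] (ε : E → P) (a b : E) : Prop :=
  a < b ∧ ε a = ε b ∧ ∀ c ∈ Set.Icc a b, ε c = ε a → c = a ∨ c = b

/-- The set `S_{[a,b]}` of elements of `[a, b]` whose label is distinct from,
but concurrent with, the label of `a`. -/
def intervalS {E P : Type*} [PartialOrder E] (C : P → P → Prop) (ε : E → P)
    (a b : E) : Set E :=
  {c | c ∈ Set.Icc a b ∧ ε c ≠ ε a ∧ C (ε a) (ε c)}

/-- The concurrency subgraph of the heap (the simple graph on the labels
occurring in `E`, with distinct labels adjacent iff concurrent) is acyclic. -/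
def NoCircuits {E P : Type*} [PartialOrder E] (C : P → P → Prop) (ε : E → P) : Prop :=
  (SimpleGraph.fromRel (fun v w : Set.range ε => C v.1 w.1)).IsAcyclic

/-- A single commutation move: swap an adjacent pair of commuting generators. -/
def CommMove {B : Type*} (M : CoxeterMatrix B) (ω ω' : List B) : Prop :=
  ∃ (l₁ l₂ : List B) (s t : B), M s t = 2 ∧
    ω = l₁ ++ s :: t :: l₂ ∧ ω' = l₁ ++ t :: s :: l₂

/-- `w` is fully commutative: any two reduced words for `w` are related by a
sequence of commutation moves. -/
def IsFullyCommutative {B W : Type*} [Group W] {M : CoxeterMatrix B}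
    (cs : CoxeterSystem M W) (w : W) : Prop :=
  ∀ ω ω' : List B, cs.IsReduced ω → cs.IsReduced ω' →
    cs.wordProd ω = w → cs.wordProd ω' = w →
      Relation.EqvGen (CommMove M) ω ω'

/-- The Coxeter system is FC-finite: only finitely many fully commutative elements. -/
def FCFinite {B W : Type*} [Group W] {M : CoxeterMatrix B}
    (cs : CoxeterSystem M W) : Prop :=
  {w : W | IsFullyCommutative cs w}.Finite

/-- A heap with pieces in `B` (concurrency: `m s t ≠ 2`) is the heap of a fully
commutative element for the Coxeter matrix `m` (`m s t = 0` encodes `m(s,t) = ∞`):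
there is no convex chain with labels alternating `s, t, s, …` of length `m s t ≥ 3`,
and no covering relation whose endpoints carry the same label. -/
def IsFCHeap {E B : Type*} [PartialOrder E] (m : B → B → ℕ) (ε : E → B) : Prop :=
  IsHeap (fun s t => m s t ≠ 2) ε ∧
  (∀ (s t : B) (k : ℕ), 3 ≤ k → m s t = k →
    ¬ ∃ α : Fin k → E, StrictMono α ∧
        (∀ γ : E, ∀ i j : Fin k, α i < γ → γ < α j → ∃ l : Fin k, γ = α l) ∧
        (∀ i : Fin k, ε (α i) = if (i : ℕ) % 2 = 0 then s else t)) ∧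
  (∀ α β : E, α ⋖ β → ε α ≠ ε β)

set_option linter.unusedSectionVars false
set_option maxHeartbeats 1000000

lemma Aadj {n : ℕ} (s t : Fin n) :
    (CoxeterMatrix.Aₙ n s t ≠ 2) ↔ ((s:ℕ) = t ∨ (s:ℕ)+1 = t ∨ (t:ℕ)+1 = s) := by
  by_cases h : s = t
  · subst h; simp
  · have hv : (s:ℕ) ≠ (t:ℕ) := fun hh => h (Fin.val_injective hh)
    simp only [CoxeterMatrix.Aₙ, CoxeterMatrix.A, Matrix.of_apply, h, if_false]
    by_cases h2 : (t:ℕ)+1 = s ∨ (s:ℕ)+1 = t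
    · simp [h2]; omega
    · simp [h2]; omega

lemma Aadj3 {n : ℕ} (s t : Fin n) (h : (s:ℕ)+1 = t ∨ (t:ℕ)+1 = s) :
    CoxeterMatrix.Aₙ n s t = 3 := by
  have hv : s ≠ t := by
    intro hh; subst hh; omega
  simp only [CoxeterMatrix.Aₙ, CoxeterMatrix.A, Matrix.of_apply, hv, if_false]
  simp [h.symm, or_comm.mp h]

theorem Set.Finite.exists_maximal_wrt {α β : Type*} [PartialOrder β] (f : α → β) (s : Set α)
    (h : s.Finite) (hs : s.Nonempty) : ∃ a ∈ s, ∀ a' ∈ s, f a ≤ f a' → f a = f a' := by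
  obtain ⟨a, ha, hmax⟩ := h.exists_maximalFor f s hs
  exact ⟨a, ha, fun a' ha' hle => le_antisymm hle (hmax ha' hle)⟩

section Heap

variable {E : Type*} [PartialOrder E] [Finite E] {n : ℕ} {ε : E → Fin n}

lemma walk_lemma
    (hTG : ∀ a b : E, a ≤ b ↔ Relation.TransGen (fun x y : E => x ≤ y ∧ CoxeterMatrix.Aₙ n (ε x) (ε y) ≠ 2) a b)
    {a b : E} (hab : a ≤ b) (t : ℕ)
    (ht : ((ε a : ℕ) < t ∧ t < (ε b : ℕ)) ∨ ((ε b : ℕ) < t ∧ t < (ε a : ℕ))) :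
    ∃ w : E, a ≤ w ∧ w ≤ b ∧ (ε w : ℕ) = t := by
  have h := (hTG a b).mp hab
  clear hab
  revert ht
  induction h using Relation.TransGen.head_induction_on with
  | single h =>
      intro ht
      exfalso
      have := (Aadj (ε _) (ε b)).mp h.2
      omega
  | head h' h ihc =>
      intro ht
      rename_i a' c
      have hadj := (Aadj (ε a') (ε c)).mp h'.2
      have hcb : c ≤ b := (hTG c b).mpr h
      by_cases h2 : ((ε c : ℕ) < t ∧ t < (ε b : ℕ)) ∨ ((ε b : ℕ) < t ∧ t < (ε c : ℕ))
      · obtain ⟨w, hw1, hw2, hw3⟩ := ihc h2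
        exact ⟨w, le_trans h'.1 hw1, hw2, hw3⟩
      · have : (ε c : ℕ) = t := by omega
        exact ⟨c, h'.1, hcb, this⟩

lemma le_concur
    (hTG : ∀ a b : E, a ≤ b ↔ Relation.TransGen (fun x y : E => x ≤ y ∧ CoxeterMatrix.Aₙ n (ε x) (ε y) ≠ 2) a b)
    {a b : E} (hab : a ≤ b) (hne : a ≠ b)
    (hmid : ∀ c : E, a < c → c < b → False) :
    CoxeterMatrix.Aₙ n (ε a) (ε b) ≠ 2 := by
  have h := (hTG a b).mp hab
  clear hab
  revert hne hmid
  induction h using Relation.TransGen.head_induction_on with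
  | single h => intro _ _; exact h.2
  | head h' h ihc =>
      intro hne hmid
      rename_i a' c
      by_cases hca : c = a'
      · subst hca; exact ihc hne hmid
      by_cases hcb : c = b
      · subst hcb; exact h'.2
      · exfalso
        have h1 : a' < c := lt_of_le_of_ne h'.1 (Ne.symm hca)
        have h2 : c < b := lt_of_le_of_ne ((hTG c b).mpr h) hcb
        exact hmid c h1 h2

lemma cover_adj
    (hTG : ∀ a b : E, a ≤ b ↔ Relation.TransGen (fun x y : E => x ≤ y ∧ CoxeterMatrix.Aₙ n (ε x) (ε y) ≠ 2) a b)
    (hcov : ∀ a b : E, a ⋖ b → ε a ≠ ε b)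
    {a b : E} (h : a ⋖ b) : ((ε a:ℕ)+1 = ε b ∨ (ε b:ℕ)+1 = ε a) := by
  have hC := le_concur hTG h.1.le h.1.ne (fun c h1 h2 => h.2 h1 h2)
  have := (Aadj (ε a) (ε b)).mp hC
  have hne : (ε a : ℕ) ≠ (ε b : ℕ) := fun hh => hcov a b h (Fin.val_injective hh)
  omega

lemma struct
    (hC : ∀ a b : E, CoxeterMatrix.Aₙ n (ε a) (ε b) ≠ 2 → a ≤ b ∨ b ≤ a)
    (hTG : ∀ a b : E, a ≤ b ↔ Relation.TransGen (fun x y : E => x ≤ y ∧ CoxeterMatrix.Aₙ n (ε x) (ε y) ≠ 2) a b)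
    (hconv : ∀ (s t : Fin n) (k : ℕ), 3 ≤ k → CoxeterMatrix.Aₙ n s t = k →
      ¬ ∃ α : Fin k → E, StrictMono α ∧
          (∀ γ : E, ∀ i j : Fin k, α i < γ → γ < α j → ∃ l : Fin k, γ = α l) ∧
          (∀ i : Fin k, ε (α i) = if (i : ℕ) % 2 = 0 then s else t))
    (hcov : ∀ a b : E, a ⋖ b → ε a ≠ ε b) :
    ∀ (N : ℕ) (u v : E), (Set.Icc u v).ncard ≤ N → u < v → ε u = ε v →
      (∀ γ, u < γ → γ < v → ε γ ≠ ε u) →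
      ∃ a b : E, (u < a ∧ a < v) ∧ (u < b ∧ b < v) ∧
        ((ε a:ℕ)+1 = (ε u:ℕ)) ∧ ((ε u:ℕ)+1 = (ε b:ℕ)) ∧
        (∀ γ, u < γ → γ < v → γ = a ∨ γ = b) := by
  intro N
  induction N with
  | zero =>
      intro u v hcard huv _ _
      exfalso
      have h1 : 0 < (Set.Icc u v).ncard :=
        (Set.ncard_pos (Set.toFinite _)).mpr ⟨u, by simp [huv.le]⟩
      omega
  | succ N IH =>
      intro u v hcard huv hlab hno
      set t : ℕ := (ε u : ℕ) with htdef
      have hvv : (ε v : ℕ) = t := by rw [htdef, hlab]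
      -- the open interval is nonempty
      have hmid : ∃ γ : E, u < γ ∧ γ < v := by
        by_contra hemp
        push_neg at hemp
        exact hcov u v ⟨huv, fun c h1 h2 => hemp c h1 h2⟩ hlab
      -- at most one element of label t+1 in the open interval
      have oneUpKey : ∀ d1 d2 : E, u < d1 → d1 < v → u < d2 → d2 < v →
          (ε d1:ℕ) = t+1 → (ε d2:ℕ) = t+1 → d1 < d2 → False := by
        intro d1 d2 h1 h2 h3 h4 hl1 hl2 hlt
        set S : Set E := {z : E | (u < z ∧ z < v) ∧ (ε z:ℕ) = t+1 ∧ z < d2} with hS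
        obtain ⟨c1, hc1S, hc1max⟩ :=
          Set.Finite.exists_maximal_wrt id S (Set.toFinite S) ⟨d1, ⟨h1, h2⟩, hl1, hlt⟩
        obtain ⟨⟨hc1u, hc1v⟩, hc1l, hc1d2⟩ := hc1S
        have hlabeq : ε c1 = ε d2 := Fin.val_injective (by omega)
        have hss : Set.Icc c1 d2 ⊆ Set.Icc u v :=
          fun y hy => ⟨le_trans hc1u.le hy.1, le_trans hy.2 h4.le⟩
        have hss' : Set.Icc c1 d2 ⊂ Set.Icc u v :=
          lt_of_le_not_ge hss
            (fun hsup => absurd (hsup ⟨le_refl u, huv.le⟩).1 (not_le_of_gt hc1u))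
        have hcard2 : (Set.Icc c1 d2).ncard ≤ N := by
          have := Set.ncard_lt_ncard hss' (Set.toFinite _)
          omega
        have hnomid : ∀ γ, c1 < γ → γ < d2 → ε γ ≠ ε c1 := by
          intro γ hg1 hg2 hgl
          have hγS : γ ∈ S := by
            refine ⟨⟨lt_trans hc1u hg1, lt_trans hg2 h4⟩, ?_, hg2⟩
            rw [hgl]; exact hc1l
          exact absurd (hc1max γ hγS hg1.le) hg1.ne
        obtain ⟨a', b', ⟨ha'1, ha'2⟩, _, ha'l, _, _⟩ := IH c1 d2 hcard2 hc1d2 hlabeq hnomid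
        exact hno a' (lt_trans hc1u ha'1) (lt_trans ha'2 h4)
          (Fin.val_injective (by omega : ((ε a' : Fin n):ℕ) = ((ε u : Fin n):ℕ)))
      have oneUp : ∀ d1 d2 : E, u < d1 → d1 < v → u < d2 → d2 < v →
          (ε d1:ℕ) = t+1 → (ε d2:ℕ) = t+1 → d1 = d2 := by
        intro d1 d2 h1 h2 h3 h4 hl1 hl2
        by_contra hne
        rcases hC d1 d2 ((Aadj _ _).mpr (Or.inl (by omega))) with h | h
        · exact oneUpKey d1 d2 h1 h2 h3 h4 hl1 hl2 (lt_of_le_of_ne h hne)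
        · exact oneUpKey d2 d1 h3 h4 h1 h2 hl2 hl1 (lt_of_le_of_ne h (Ne.symm hne))
      -- at most one element of label t-1 in the open interval
      have oneDownKey : ∀ d1 d2 : E, u < d1 → d1 < v → u < d2 → d2 < v →
          (ε d1:ℕ)+1 = t → (ε d2:ℕ)+1 = t → d1 < d2 → False := by
        intro d1 d2 h1 h2 h3 h4 hl1 hl2 hlt
        set S : Set E := {z : E | (u < z ∧ z < v) ∧ (ε z:ℕ)+1 = t ∧ z < d2} with hS
        obtain ⟨c1, hc1S, hc1max⟩ :=
          Set.Finite.exists_maximal_wrt id S (Set.toFinite S) ⟨d1, ⟨h1, h2⟩, hl1, hlt⟩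
        obtain ⟨⟨hc1u, hc1v⟩, hc1l, hc1d2⟩ := hc1S
        have hlabeq : ε c1 = ε d2 := Fin.val_injective (by omega)
        have hss : Set.Icc c1 d2 ⊆ Set.Icc u v :=
          fun y hy => ⟨le_trans hc1u.le hy.1, le_trans hy.2 h4.le⟩
        have hss' : Set.Icc c1 d2 ⊂ Set.Icc u v :=
          lt_of_le_not_ge hss
            (fun hsup => absurd (hsup ⟨le_refl u, huv.le⟩).1 (not_le_of_gt hc1u))
        have hcard2 : (Set.Icc c1 d2).ncard ≤ N := by
          have := Set.ncard_lt_ncard hss' (Set.toFinite _)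
          omega
        have hnomid : ∀ γ, c1 < γ → γ < d2 → ε γ ≠ ε c1 := by
          intro γ hg1 hg2 hgl
          have hγS : γ ∈ S := by
            refine ⟨⟨lt_trans hc1u hg1, lt_trans hg2 h4⟩, ?_, hg2⟩
            rw [hgl]; exact hc1l
          exact absurd (hc1max γ hγS hg1.le) hg1.ne
        obtain ⟨a', b', _, ⟨hb'1, hb'2⟩, _, hb'l, _⟩ := IH c1 d2 hcard2 hc1d2 hlabeq hnomid
        exact hno b' (lt_trans hc1u hb'1) (lt_trans hb'2 h4)
          (Fin.val_injective (by omega : ((ε b' : Fin n):ℕ) = ((ε u : Fin n):ℕ)))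
      have oneDown : ∀ d1 d2 : E, u < d1 → d1 < v → u < d2 → d2 < v →
          (ε d1:ℕ)+1 = t → (ε d2:ℕ)+1 = t → d1 = d2 := by
        intro d1 d2 h1 h2 h3 h4 hl1 hl2
        by_contra hne
        rcases hC d1 d2 ((Aadj _ _).mpr (Or.inl (by omega))) with h | h
        · exact oneDownKey d1 d2 h1 h2 h3 h4 hl1 hl2 (lt_of_le_of_ne h hne)
        · exact oneDownKey d2 d1 h3 h4 h1 h2 hl2 hl1 (lt_of_le_of_ne h (Ne.symm hne))
      -- every element of the open interval has label t-1 or t+1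
      have hsplit : ∀ γ, u < γ → γ < v → ((ε γ:ℕ)+1 = t ∨ (ε γ:ℕ) = t+1) := by
        intro γ hg1 hg2
        have hne : (ε γ:ℕ) ≠ t := fun hh => hno γ hg1 hg2 (Fin.val_injective hh)
        by_cases hbig : t+2 ≤ (ε γ:ℕ)
        · exfalso
          obtain ⟨w1, hw11, hw12, hw13⟩ := walk_lemma hTG hg1.le (t+1)
            (Or.inl ⟨by omega, by omega⟩)
          obtain ⟨w2, hw21, hw22, hw23⟩ := walk_lemma hTG hg2.le (t+1)
            (Or.inr ⟨by omega, by omega⟩)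
          have hw1u : u < w1 := lt_of_le_of_ne hw11 (by intro hh; rw [← hh] at hw13; omega)
          have hw1v : w1 < v := lt_of_le_of_lt hw12 hg2
          have hw2u : u < w2 := lt_of_lt_of_le hg1 hw21
          have hw2v : w2 < v := lt_of_le_of_ne hw22 (by intro hh; rw [hh] at hw23; omega)
          have heq : w1 = w2 := oneUp w1 w2 hw1u hw1v hw2u hw2v hw13 hw23
          have hlt : w1 < γ := lt_of_le_of_ne hw12 (by intro hh; rw [hh] at hw13; omega)
          rw [heq] at hlt
          exact absurd hw21 (not_le_of_gt hlt)
        by_cases hsmall : (ε γ:ℕ)+2 ≤ t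
        · exfalso
          obtain ⟨w1, hw11, hw12, hw13⟩ := walk_lemma hTG hg1.le (t-1)
            (Or.inr ⟨by omega, by omega⟩)
          obtain ⟨w2, hw21, hw22, hw23⟩ := walk_lemma hTG hg2.le (t-1)
            (Or.inl ⟨by omega, by omega⟩)
          have hw1u : u < w1 := lt_of_le_of_ne hw11 (by intro hh; rw [← hh] at hw13; omega)
          have hw1v : w1 < v := lt_of_le_of_lt hw12 hg2
          have hw2u : u < w2 := lt_of_lt_of_le hg1 hw21
          have hw2v : w2 < v := lt_of_le_of_ne hw22 (by intro hh; rw [hh] at hw23; omega)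
          have heq : w1 = w2 := oneDown w1 w2 hw1u hw1v hw2u hw2v (by omega) (by omega)
          have hlt : w1 < γ := lt_of_le_of_ne hw12 (by intro hh; rw [hh] at hw13; omega)
          rw [heq] at hlt
          exact absurd hw21 (not_le_of_gt hlt)
        omega
      -- if the interval were a singleton we would get a forbidden convex chain
      have singContra : ∀ c : E, u < c → c < v → (∀ γ, u < γ → γ < v → γ = c) →
          ((ε c:ℕ)+1 = t ∨ t+1 = (ε c:ℕ)) → False := by
        intro c hcu hcv hsing hadjc
        have hm3 : CoxeterMatrix.Aₙ n (ε u) (ε c) = 3 := Aadj3 _ _ (by omega)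
        apply hconv (ε u) (ε c) 3 (le_refl 3) hm3
        refine ⟨![u, c, v], ?_, ?_, ?_⟩
        · intro i j hij
          fin_cases i <;> fin_cases j <;>
            simp only [Matrix.cons_val_zero, Matrix.cons_val_one, Matrix.head_cons,
              Fin.mk_lt_mk, Matrix.cons_val_two, Matrix.tail_cons] at hij ⊢ <;>
            first
              | exact hcu
              | exact huv
              | exact hcv
              | omega
        · intro γ i j hiγ hγj
          fin_cases i <;> fin_cases j <;>
            simp only [Matrix.cons_val_zero, Matrix.cons_val_one, Matrix.head_cons,
              Matrix.cons_val_two, Matrix.tail_cons] at hiγ hγj <;>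
            [skip; skip; skip; skip; skip; skip; skip; skip; skip]
          · exact absurd (lt_trans hiγ hγj) (lt_irrefl u)
          · exact absurd (hsing γ hiγ (lt_trans hγj hcv)) (ne_of_lt hγj)
          · exact ⟨1, (hsing γ hiγ hγj).symm ▸ rfl⟩
          · exact absurd (lt_trans hγj hcu) (not_lt_of_gt hiγ)
          · exact absurd (lt_trans hiγ hγj) (lt_irrefl c)
          · exact absurd (hsing γ (lt_trans hcu hiγ) hγj) (fun hh => absurd (hh ▸ hiγ) (lt_irrefl c))
          · exact absurd (lt_trans hγj huv) (not_lt_of_gt hiγ)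
          · exact absurd (lt_trans hγj hcv) (not_lt_of_gt hiγ)
          · exact absurd (lt_trans hiγ hγj) (lt_irrefl v)
        · intro i
          fin_cases i <;>
            simp only [Matrix.cons_val_zero, Matrix.cons_val_one, Matrix.head_cons,
              Matrix.cons_val_two, Matrix.tail_cons]
          · rfl
          · rfl
          · exact hlab.symm
      obtain ⟨γ0, hg1, hg2⟩ := hmid
      rcases hsplit γ0 hg1 hg2 with hg0 | hg0
      · -- γ0 has label t-1 ; find the element of label t+1
        have hexb : ∃ b, (u < b ∧ b < v) ∧ (ε b:ℕ) = t+1 := by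
          by_contra hnotb
          push_neg at hnotb
          apply singContra γ0 hg1 hg2 ?_ (Or.inl hg0)
          intro γ hγ1 hγ2
          rcases hsplit γ hγ1 hγ2 with h | h
          · exact oneDown γ γ0 hγ1 hγ2 hg1 hg2 h hg0
          · exact absurd h (hnotb γ ⟨hγ1, hγ2⟩)
        obtain ⟨b, ⟨hbu, hbv⟩, hbl⟩ := hexb
        refine ⟨γ0, b, ⟨hg1, hg2⟩, ⟨hbu, hbv⟩, hg0, by omega, ?_⟩
        intro γ hγ1 hγ2
        rcases hsplit γ hγ1 hγ2 with h | h
        · exact Or.inl (oneDown γ γ0 hγ1 hγ2 hg1 hg2 h hg0)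
        · exact Or.inr (oneUp γ b hγ1 hγ2 hbu hbv h hbl)
      · -- γ0 has label t+1 ; find the element of label t-1
        have hexa : ∃ a, (u < a ∧ a < v) ∧ (ε a:ℕ)+1 = t := by
          by_contra hnota
          push_neg at hnota
          apply singContra γ0 hg1 hg2 ?_ (Or.inr hg0.symm)
          intro γ hγ1 hγ2
          rcases hsplit γ hγ1 hγ2 with h | h
          · exact absurd h (hnota γ ⟨hγ1, hγ2⟩)
          · exact oneUp γ γ0 hγ1 hγ2 hg1 hg2 h hg0
        obtain ⟨a, ⟨hau, hav⟩, hal⟩ := hexa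
        refine ⟨a, γ0, ⟨hau, hav⟩, ⟨hg1, hg2⟩, hal, by omega, ?_⟩
        intro γ hγ1 hγ2
        rcases hsplit γ hγ1 hγ2 with h | h
        · exact Or.inl (oneDown γ a hγ1 hγ2 hau hav h hal)
        · exact Or.inr (oneUp γ γ0 hγ1 hγ2 hg1 hg2 h hg0)

end Heap

/-- Remark 3.3.7 (second part): every heap of a fully commutative element of a
Coxeter group of type Aₙ is ranked. -/
theorem ranked_of_typeA_fcHeap {E : Type*} [PartialOrder E] [Finite E]
    (n : ℕ) (ε : E → Fin n)
    (hheap : IsFCHeap (fun s t => CoxeterMatrix.Aₙ n s t) ε) :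
    Ranked E := by
  classical
  obtain ⟨⟨hC, hTG⟩, hconv, hcov⟩ := hheap
  have main : ∀ D : Finset E, IsLowerSet (↑D : Set E) →
      ∃ ρ : E → ℤ, ∀ a ∈ D, ∀ b ∈ D, a ⋖ b → ρ b = ρ a + 1 := by
    intro D
    induction D using Finset.strongInduction with
    | _ D IH =>
      intro hLS
      rcases D.eq_empty_or_nonempty with rfl | hne
      · exact ⟨fun _ => 0, by simp⟩
      obtain ⟨x, hxD, hxmax⟩ : ∃ x ∈ D, ∀ x' ∈ D, ¬ x < x' := by
        obtain ⟨x, hx⟩ := D.exists_maximal hne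
        exact ⟨x, hx.1, fun y hy h => not_le_of_gt h (hx.2 hy h.le)⟩
      have hDx : ∀ y : E, y < x → y ∈ D := fun y hy => by
        exact_mod_cast hLS hy.le (show x ∈ (↑D : Set E) from hxD)
      set D' := D.erase x with hD'
      have hLS' : IsLowerSet (↑D' : Set E) := by
        intro p q hqp hp
        have hp' : p ∈ D' := hp
        have hpD : p ∈ D := Finset.mem_of_mem_erase hp'
        have hpx : p ≠ x := (Finset.mem_erase.mp hp').1
        have hqD : q ∈ D := by exact_mod_cast hLS hqp (show p ∈ (↑D : Set E) from hpD)
        have hqx : q ≠ x := by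
          intro hh
          subst hh
          exact hxmax p hpD (lt_of_le_of_ne hqp (Ne.symm hpx))
        exact Finset.mem_coe.mpr (Finset.mem_erase.mpr ⟨hqx, hqD⟩)
      obtain ⟨ρ', hρ'⟩ := IH D' (Finset.erase_ssubset hxD) hLS'
      have hmemD' : ∀ y : E, y < x → y ∈ D' :=
        fun y hy => Finset.mem_erase.mpr ⟨hy.ne, hDx y hy⟩
      have lcu : ∀ c d : E, c ⋖ x → d ⋖ x → ((ε c:ℕ) = (ε d:ℕ)) → c = d := by
        intro c d hc hd hl
        by_contra hne
        rcases hC c d ((Aadj _ _).mpr (Or.inl hl)) with h | h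
        · exact hc.2 (lt_of_le_of_ne h hne) hd.1
        · exact hd.2 (lt_of_le_of_ne h (Ne.symm hne)) hc.1
      have finish : ∀ (ρ'' : E → ℤ), (∀ a ∈ D', ∀ b ∈ D', a ⋖ b → ρ'' b = ρ'' a + 1) →
          ∀ w : ℤ, (∀ c : E, c ⋖ x → w = ρ'' c + 1) →
          ∃ ρ : E → ℤ, ∀ a ∈ D, ∀ b ∈ D, a ⋖ b → ρ b = ρ a + 1 := by
        intro ρ'' hρ'' w hw
        refine ⟨Function.update ρ'' x w, ?_⟩
        intro a ha b hb hab
        by_cases hbx : b = x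
        · rw [hbx] at hab ⊢
          have hax : a ≠ x := hab.1.ne
          rw [Function.update_self, Function.update_of_ne hax]
          exact hw a hab
        · by_cases hax : a = x
          · subst hax
            exact absurd hab.1 (hxmax b hb)
          · rw [Function.update_of_ne hbx, Function.update_of_ne hax]
            exact hρ'' a (Finset.mem_erase.mpr ⟨hax, ha⟩) b (Finset.mem_erase.mpr ⟨hbx, hb⟩) hab
      by_cases hA : ∃ a : E, a ⋖ x ∧ (ε a:ℕ)+1 = (ε x:ℕ)
      · by_cases hB : ∃ b : E, b ⋖ x ∧ (ε x:ℕ)+1 = (ε b:ℕ)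
        · -- two lower covers
          obtain ⟨a, haC, hal⟩ := hA
          obtain ⟨b, hbC, hbl⟩ := hB
          by_cases hz : ∃ z : E, z < x ∧ ε z = ε x
          · -- there is an element of the same label below x
            obtain ⟨z0, hz0⟩ := hz
            obtain ⟨z, ⟨hzx, hzl⟩, hzmax⟩ := Set.Finite.exists_maximal_wrt id
              {z : E | z < x ∧ ε z = ε x} (Set.toFinite _) ⟨z0, hz0⟩
            have hzv : (ε z:ℕ) = (ε x:ℕ) := congrArg Fin.val hzl
            have hnos : ∀ γ, z < γ → γ < x → ε γ ≠ ε z := by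
              intro γ h1 h2 hh
              exact absurd (hzmax γ ⟨h2, hh.symm ▸ hzl⟩ h1.le) h1.ne
            obtain ⟨a₀, b₀, ⟨ha₀1, ha₀2⟩, ⟨hb₀1, hb₀2⟩, ha₀l, hb₀l, hclass⟩ :=
              struct hC hTG hconv hcov (Set.Icc z x).ncard z x le_rfl hzx hzl hnos
            have haz : z < a := by
              rcases hC z a ((Aadj _ _).mpr (by right; right; omega)) with h | h
              · exact lt_of_le_of_ne h (by intro hh; rw [hh] at hzv; omega)
              · exact absurd hzx (haC.2 (lt_of_le_of_ne h (by intro hh; rw [← hh] at hzv; omega)))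
            have hbz : z < b := by
              rcases hC z b ((Aadj _ _).mpr (by right; left; omega)) with h | h
              · exact lt_of_le_of_ne h (by intro hh; rw [hh] at hzv; omega)
              · exact absurd hzx (hbC.2 (lt_of_le_of_ne h (by intro hh; rw [← hh] at hzv; omega)))
            have haa₀ : a = a₀ := by
              rcases hclass a haz haC.1 with h | h
              · exact h
              · exfalso
                have := congrArg (fun y => ((ε y : Fin n):ℕ)) h
                omega
            have hbb₀ : b = b₀ := by
              rcases hclass b hbz hbC.1 with h | h
              · exfalso
                have := congrArg (fun y => ((ε y : Fin n):ℕ)) h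
                omega
              · exact h
            have hza : z ⋖ a := by
              refine ⟨haz, ?_⟩
              intro γ h1 h2
              have h2x : γ < x := lt_trans h2 haC.1
              rcases hclass γ h1 h2x with rfl | rfl
              · rw [haa₀] at h2
                exact lt_irrefl _ h2
              · obtain ⟨w, hw1, hw2, hw3⟩ := walk_lemma hTG h2.le ((ε x:ℕ))
                  (Or.inr ⟨by omega, by omega⟩)
                exact hnos w (lt_of_lt_of_le h1 hw1) (lt_of_le_of_lt hw2 haC.1)
                  (Fin.val_injective (by omega))
            have hzb : z ⋖ b := by
              refine ⟨hbz, ?_⟩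
              intro γ h1 h2
              have h2x : γ < x := lt_trans h2 hbC.1
              rcases hclass γ h1 h2x with rfl | rfl
              · obtain ⟨w, hw1, hw2, hw3⟩ := walk_lemma hTG h2.le ((ε x:ℕ))
                  (Or.inl ⟨by omega, by omega⟩)
                exact hnos w (lt_of_lt_of_le h1 hw1) (lt_of_le_of_lt hw2 hbC.1)
                  (Fin.val_injective (by omega))
              · rw [hbb₀] at h2
                exact lt_irrefl _ h2
            have hzD' : z ∈ D' := hmemD' z hzx
            have haD' : a ∈ D' := hmemD' a haC.1
            have hbD' : b ∈ D' := hmemD' b hbC.1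
            have e1 : ρ' a = ρ' z + 1 := hρ' z hzD' a haD' hza
            have e2 : ρ' b = ρ' z + 1 := hρ' z hzD' b hbD' hzb
            refine finish ρ' hρ' (ρ' a + 1) ?_
            intro c hc
            rcases cover_adj hTG hcov hc with h | h
            · rw [lcu c a hc haC (by omega)]
            · rw [lcu c b hc hbC (by omega), e2, e1]
          · -- no element of the same label below x : shift components
            set R' : E → E → Prop := fun p q => p ⋖ q ∧ p ∈ D' ∧ q ∈ D' with hR'
            have memlem : ∀ p q : E, Relation.EqvGen R' p q → p = q ∨ (p ∈ D' ∧ q ∈ D') := by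
              intro p q h
              induction h with
              | rel p q hr => exact Or.inr ⟨hr.2.1, hr.2.2⟩
              | refl p => exact Or.inl rfl
              | symm p q h ih => tauto
              | trans p q r h1 h2 ih1 ih2 =>
                  rcases ih1 with rfl | ⟨h3, h4⟩
                  · exact ih2
                  · rcases ih2 with rfl | ⟨h5, h6⟩
                    · exact Or.inr ⟨h3, h4⟩
                    · exact Or.inr ⟨h3, h6⟩
            have cross : ∀ p q : E, Relation.EqvGen R' p q → ∀ m : ℕ,
                (((ε p:ℕ) < m ∧ m < (ε q:ℕ)) ∨ ((ε q:ℕ) < m ∧ m < (ε p:ℕ))) →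
                ∃ y, y ∈ D' ∧ (ε y:ℕ) = m := by
              intro p q h
              induction h with
              | rel p q hr =>
                  intro m hm
                  exfalso
                  rcases cover_adj hTG hcov hr.1 with h | h <;> omega
              | refl p => intro m hm; exfalso; omega
              | symm p q h ih => intro m hm; exact ih m (by tauto)
              | trans p q r h1 h2 ih1 ih2 =>
                  intro m hm
                  by_cases h3 : ((ε p:ℕ) < m ∧ m < (ε q:ℕ)) ∨ ((ε q:ℕ) < m ∧ m < (ε p:ℕ))
                  · exact ih1 m h3
                  by_cases h4 : ((ε q:ℕ) < m ∧ m < (ε r:ℕ)) ∨ ((ε r:ℕ) < m ∧ m < (ε q:ℕ))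
                  · exact ih2 m h4
                  · have hq : (ε q:ℕ) = m := by omega
                    have hpq : p ≠ q := by
                      intro hh
                      rw [hh] at hm
                      omega
                    rcases memlem p q h1 with rfl | ⟨_, hqD⟩
                    · exact absurd rfl hpq
                    · exact ⟨q, hqD, hq⟩
            have hnab : ¬ Relation.EqvGen R' b a := by
              intro h
              obtain ⟨y, hyD', hyl⟩ := cross b a h (ε x:ℕ) (Or.inr ⟨by omega, by omega⟩)
              have hyx : ε y = ε x := Fin.val_injective hyl
              have hyne : y ≠ x := (Finset.mem_erase.mp hyD').1
              rcases hC y x ((Aadj _ _).mpr (Or.inl (congrArg Fin.val hyx))) with h' | h'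
              · exact hz ⟨y, lt_of_le_of_ne h' hyne, hyx⟩
              · exact hxmax y (Finset.mem_of_mem_erase hyD') (lt_of_le_of_ne h' (Ne.symm hyne))
            set ρ'' : E → ℤ :=
              fun y => if Relation.EqvGen R' b y then ρ' y + (ρ' a - ρ' b) else ρ' y with hρ''def
            have hρ''rank : ∀ p ∈ D', ∀ q ∈ D', p ⋖ q → ρ'' q = ρ'' p + 1 := by
              intro p hp q hq hpq
              have hstep : Relation.EqvGen R' p q := Relation.EqvGen.rel p q ⟨hpq, hp, hq⟩
              have hiff : Relation.EqvGen R' b p ↔ Relation.EqvGen R' b q :=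
                ⟨fun h => Relation.EqvGen.trans _ _ _ h hstep,
                 fun h => Relation.EqvGen.trans _ _ _ h (Relation.EqvGen.symm _ _ hstep)⟩
              simp only [hρ''def]
              by_cases hcase : Relation.EqvGen R' b q
              · rw [if_pos hcase, if_pos (hiff.mpr hcase), hρ' p hp q hq hpq]
                ring
              · rw [if_neg hcase, if_neg (fun hh => hcase (hiff.mp hh)), hρ' p hp q hq hpq]
            have hb'' : ρ'' b = ρ' a := by
              simp only [hρ''def, if_pos (Relation.EqvGen.refl b)]
              ring
            have ha'' : ρ'' a = ρ' a := by
              simp only [hρ''def, if_neg hnab]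
            refine finish ρ'' hρ''rank (ρ' a + 1) ?_
            intro c hc
            rcases cover_adj hTG hcov hc with h | h
            · rw [lcu c a hc haC (by omega), ha'']
            · rw [lcu c b hc hbC (by omega), hb'']
        · -- only a lower cover of smaller label
          obtain ⟨a, haC, hal⟩ := hA
          refine finish ρ' hρ' (ρ' a + 1) ?_
          intro c hc
          rcases cover_adj hTG hcov hc with h | h
          · rw [lcu c a hc haC (by omega)]
          · exact absurd ⟨c, hc, by omega⟩ hB
      · by_cases hB : ∃ b : E, b ⋖ x ∧ (ε x:ℕ)+1 = (ε b:ℕ)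
        · -- only a lower cover of larger label
          obtain ⟨b, hbC, hbl⟩ := hB
          refine finish ρ' hρ' (ρ' b + 1) ?_
          intro c hc
          rcases cover_adj hTG hcov hc with h | h
          · exact absurd ⟨c, hc, by omega⟩ hA
          · rw [lcu c b hc hbC (by omega)]
        · -- no lower covers at all
          refine finish ρ' hρ' 0 ?_
          intro c hc
          rcases cover_adj hTG hcov hc with h | h
          · exact absurd ⟨c, hc, by omega⟩ hA
          · exact absurd ⟨c, hc, by omega⟩ hB
  have : Fintype E := Fintype.ofFinite E
  obtain ⟨ρ, hρ⟩ := main Finset.univ (by intro p q _ _; simp)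
  exact ⟨ρ, fun a b hab => hρ a (Finset.mem_univ a) b (Finset.mem_univ b) hab⟩
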